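/- Let α < 0 be real. For K ≥ 2, r > 0 and c, c' ∈ ℝ, define I_K(r; c, c') = ∫_r^{Kr} (c·s^α + c'·s^α·log s)²·s^{−1} ds. Then there exists K₁ ≥ 2, depending only on α, such that for every K ≥ K₁, every r > 0, and every pair (c, c') ≠ (0, 0), one has I_K(Kr; c, c') < I_K(r; c, c'). -/

import Mathlib

open MeasureTheory Set

-- continuity of the normalized integrand
lemma lma_contOn (c c' e : ℝ) :
    ContinuousOn (fun x : ℝ => (c + c' * Real.log x) ^ 2 * x ^ e) (Ioi (0:ℝ)) := by
  apply ContinuousOn.mul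
  · exact ((continuousOn_const.add (continuousOn_const.mul
      (Real.continuousOn_log.mono (fun x hx => ne_of_gt hx)))).pow 2)
  · exact continuousOn_id.rpow_const (fun x hx => Or.inl (ne_of_gt hx))

lemma lma_integrable (c c' e a b : ℝ) (ha : 0 < a) (hb : 0 < b) :
    IntervalIntegrable (fun x : ℝ => (c + c' * Real.log x) ^ 2 * x ^ e) volume a b := by
  apply ((lma_contOn c c' e).mono ?_).intervalIntegrable
  intro x hx
  exact lt_of_lt_of_le (lt_min ha hb) hx.1

lemma lma_rewrite (α c c' a b : ℝ) (ha : 0 < a) (hab : a ≤ b) :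
    ∫ s in Ioc a b, (c * s ^ α + c' * s ^ α * Real.log s) ^ 2 * s⁻¹
      = ∫ s in a..b, (c + c' * Real.log s) ^ 2 * s ^ (2 * α - 1) := by
  rw [intervalIntegral.integral_of_le hab]
  apply setIntegral_congr_fun measurableSet_Ioc
  intro s hs
  have hs0 : 0 < s := ha.trans hs.1
  have h1 : c * s ^ α + c' * s ^ α * Real.log s = (c + c' * Real.log s) * s ^ α := by ring
  have h2 : (s ^ α) ^ 2 * s⁻¹ = s ^ (2 * α - 1) := by
    rw [← Real.rpow_natCast (s ^ α) 2, ← Real.rpow_mul hs0.le, ← Real.rpow_neg_one s,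
      ← Real.rpow_add hs0]
    norm_num
    ring_nf
  simp only []
  rw [h1, mul_pow, mul_assoc, h2]

lemma lma_subst (α c c' r K : ℝ) (hr : 0 < r) (hK : 0 < K) :
    ∫ s in (K*r)..(K*(K*r)), (c + c' * Real.log s) ^ 2 * s ^ (2*α - 1)
      = K ^ (2*α) * ∫ s in r..(K*r),
          ((c + c' * Real.log K) + c' * Real.log s) ^ 2 * s ^ (2*α - 1) := by
  have h := intervalIntegral.integral_comp_mul_left
    (f := fun s : ℝ => (c + c' * Real.log s) ^ 2 * s ^ (2*α - 1)) (a := r) (b := K*r) hK.ne'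
  have h2 : ∫ s in (K*r)..(K*(K*r)), (c + c' * Real.log s) ^ 2 * s ^ (2*α - 1)
      = K • ∫ x in r..(K*r), (c + c' * Real.log (K * x)) ^ 2 * (K * x) ^ (2*α - 1) := by
    rw [h, smul_smul, mul_inv_cancel₀ hK.ne', one_smul]
  rw [h2]
  have h3 : ∫ x in r..(K*r), (c + c' * Real.log (K * x)) ^ 2 * (K * x) ^ (2*α - 1)
      = ∫ x in r..(K*r), K ^ (2*α - 1) *
          (((c + c' * Real.log K) + c' * Real.log x) ^ 2 * x ^ (2*α - 1)) := by
    apply intervalIntegral.integral_congr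
    intro x hx
    simp only []
    have hx0 : 0 < x := by
      have : min r (K*r) ≤ x := hx.1
      have hmin : 0 < min r (K*r) := lt_min hr (mul_pos hK hr)
      linarith
    rw [Real.log_mul hK.ne' hx0.ne', Real.mul_rpow hK.le hx0.le]
    ring
  rw [h3, intervalIntegral.integral_const_mul, smul_eq_mul, ← mul_assoc]
  congr 1
  rw [mul_comm, ← Real.rpow_add_one hK.ne' (2*α - 1)]
  norm_num

lemma lma_quarter : (9/8 : ℝ) ≤ (2:ℝ) ^ ((1:ℝ)/4) := by
  have h1 : ((9:ℝ)/8) = (((9:ℝ)/8) ^ ((4:ℕ):ℝ)) ^ ((1:ℝ)/4) := by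
    rw [← Real.rpow_mul (by norm_num)]; norm_num
  rw [h1]
  apply Real.rpow_le_rpow (Real.rpow_nonneg (by norm_num) _) ?_ (by norm_num)
  rw [Real.rpow_natCast]; norm_num

lemma lma_threequarter : (2:ℝ) ^ ((3:ℝ)/4) ≤ 15/8 := by
  have h1 : ((15:ℝ)/8) = (((15:ℝ)/8) ^ ((4:ℕ):ℝ)) ^ ((1:ℝ)/4) := by
    rw [← Real.rpow_mul (by norm_num)]; norm_num
  have h2 : (2:ℝ) ^ ((3:ℝ)/4) = ((2:ℝ) ^ ((3:ℕ):ℝ)) ^ ((1:ℝ)/4) := by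
    rw [← Real.rpow_mul (by norm_num)]; norm_num
  rw [h1, h2]
  apply Real.rpow_le_rpow (Real.rpow_nonneg (by norm_num) _) ?_ (by norm_num)
  rw [Real.rpow_natCast, Real.rpow_natCast]; norm_num

lemma lma_piece (α c c' r x y K : ℝ) (hα : α < 0) (hr : 0 < r) (hK : 2 ≤ K)
    (hrx : r ≤ x) (hxy : x ≤ y) (hy2 : y ≤ 2*r) (hlen : r/8 ≤ y - x)
    (hpt : ∀ t ∈ Icc x y, |c'| * Real.log 2 / 4 ≤ |c + c' * Real.log t|) :
    c'^2 * ((Real.log 2)^2 * (2:ℝ)^(2*α-1) / 128) * r^(2*α)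
      ≤ ∫ t in r..K*r, (c + c' * Real.log t)^2 * t^(2*α-1) := by
  have hKr : 2*r ≤ K*r := by nlinarith
  have hx0 : 0 < x := lt_of_lt_of_le hr hrx
  have hnn : ∀ t : ℝ, 0 < t → 0 ≤ (c + c' * Real.log t)^2 * t^(2*α-1) := fun t ht =>
    mul_nonneg (sq_nonneg _) (Real.rpow_nonneg ht.le _)
  -- step 1 : integral over subinterval bounded by whole
  have step1 : (∫ t in x..y, (c + c' * Real.log t)^2 * t^(2*α-1))
      ≤ ∫ t in r..K*r, (c + c' * Real.log t)^2 * t^(2*α-1) := by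
    apply intervalIntegral.integral_mono_interval hrx hxy (le_trans hy2 hKr)
    · filter_upwards [ae_restrict_mem measurableSet_Ioc] with t ht
      exact hnn t (hr.trans ht.1)
    · exact lma_integrable c c' _ r (K*r) hr (by nlinarith)
  -- step 2 : pointwise lower bound by a constant on [x, y]
  set m : ℝ := (|c'| * Real.log 2 / 4)^2 * (2*r)^(2*α-1) with hm
  have step2 : (y - x) * m ≤ ∫ t in x..y, (c + c' * Real.log t)^2 * t^(2*α-1) := by
    have := intervalIntegral.integral_mono_on (f := fun _ : ℝ => m)
      (g := fun t => (c + c' * Real.log t)^2 * t^(2*α-1)) (μ := volume) hxy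
      intervalIntegrable_const (lma_integrable c c' _ x y hx0 (hx0.trans_le hxy))
      ?_
    · simpa [hm, mul_comm, mul_left_comm, mul_assoc] using this
    · intro t ht
      have ht0 : 0 < t := lt_of_lt_of_le hx0 ht.1
      have hw : (2*r)^(2*α-1) ≤ t^(2*α-1) :=
        Real.rpow_le_rpow_of_nonpos ht0 (le_trans ht.2 hy2) (by linarith)
      have habs := hpt t ht
      have h0 : 0 ≤ |c'| * Real.log 2 / 4 := by
        have := Real.log_pos (by norm_num : (1:ℝ) < 2)
        positivity
      have hsq : (|c'| * Real.log 2 / 4)^2 ≤ (c + c' * Real.log t)^2 := by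
        rw [← sq_abs (c + c' * Real.log t)]
        exact pow_le_pow_left₀ h0 habs 2
      exact mul_le_mul hsq hw (Real.rpow_nonneg (by linarith) _) (sq_nonneg _)
  -- step 3 : (r/8) * m bounds the target constant
  have hm_nonneg : 0 ≤ m := by
    apply mul_nonneg (sq_nonneg _) (Real.rpow_nonneg (by linarith) _)
  have step3 : c'^2 * ((Real.log 2)^2 * (2:ℝ)^(2*α-1) / 128) * r^(2*α) ≤ (y - x) * m := by
    have h1 : (r/8) * m ≤ (y - x) * m := mul_le_mul_of_nonneg_right hlen hm_nonneg
    have h2 : c'^2 * ((Real.log 2)^2 * (2:ℝ)^(2*α-1) / 128) * r^(2*α) = (r/8) * m := by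
      rw [hm, Real.mul_rpow (by norm_num : (0:ℝ) ≤ 2) hr.le]
      have hrr : r ^ (2*α-1) * r = r ^ (2*α) := by
        rw [← Real.rpow_add_one hr.ne' (2*α-1)]; norm_num
      have habs2 : (|c'| * Real.log 2 / 4)^2 = c'^2 * (Real.log 2)^2 / 16 := by
        rw [div_pow, mul_pow, sq_abs]; ring
      rw [← hrr, habs2]; ring
    linarith
  linarith

lemma lma_lower (α c c' r K : ℝ) (hα : α < 0) (hr : 0 < r) (hK : 2 ≤ K) :
    c'^2 * ((Real.log 2)^2 * (2:ℝ)^(2*α-1) / 128) * r^(2*α)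
      ≤ ∫ t in r..K*r, (c + c' * Real.log t)^2 * t^(2*α-1) := by
  have hlog2 : 0 < Real.log 2 := Real.log_pos (by norm_num)
  set A := c + c' * Real.log r with hA
  rcases le_or_gt (|c'| * Real.log 2 / 2) |A| with hbig | hsmall
  · -- case |A| large : use [r, 2^{1/4} r]
    refine lma_piece α c c' r r ((2:ℝ)^((1:ℝ)/4) * r) K hα hr hK le_rfl ?_ ?_ ?_ ?_
    · nlinarith [lma_quarter]
    · have h2 : (2:ℝ)^((1:ℝ)/4) ≤ 2 := by
        calc (2:ℝ)^((1:ℝ)/4) ≤ (2:ℝ)^(1:ℝ) :=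
          Real.rpow_le_rpow_of_exponent_le (by norm_num) (by norm_num)
        _ = 2 := Real.rpow_one 2
      nlinarith
    · nlinarith [lma_quarter]
    · intro t ht
      have ht0 : 0 < t := lt_of_lt_of_le hr ht.1
      have hu1 : Real.log r ≤ Real.log t := Real.log_le_log hr ht.1
      have hu2 : Real.log t ≤ Real.log 2 / 4 + Real.log r := by
        have := Real.log_le_log ht0 ht.2
        rw [Real.log_mul (by positivity) hr.ne', Real.log_rpow (by norm_num)] at this
        linarith
      set u := Real.log t - Real.log r with hu
      have hdecomp : c + c' * Real.log t = A + c' * u := by rw [hA, hu]; ring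
      have habs : |c' * u| ≤ |c'| * (Real.log 2 / 4) := by
        rw [abs_mul, abs_of_nonneg (by linarith : (0:ℝ) ≤ u)]
        apply mul_le_mul_of_nonneg_left (by linarith) (abs_nonneg _)
      have htri : |A| - |c' * u| ≤ |A + c' * u| := by
        have := abs_add_le (A + c' * u) (-(c' * u))
        simp at this
        linarith [this, abs_mul c' u]
      rw [hdecomp]
      have : |c'| * Real.log 2 / 2 - |c'| * (Real.log 2 / 4) ≤ |A + c' * u| := by
        linarith
      linarith
  · -- case |A| small : use [2^{3/4} r, 2 r]
    have h34a : (1:ℝ) ≤ (2:ℝ)^((3:ℝ)/4) := by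
      calc (1:ℝ) = (2:ℝ)^(0:ℝ) := (Real.rpow_zero 2).symm
      _ ≤ (2:ℝ)^((3:ℝ)/4) := Real.rpow_le_rpow_of_exponent_le (by norm_num) (by norm_num)
    refine lma_piece α c c' r ((2:ℝ)^((3:ℝ)/4) * r) (2*r) K hα hr hK ?_ ?_ le_rfl ?_ ?_
    · nlinarith
    · nlinarith [lma_threequarter]
    · nlinarith [lma_threequarter]
    · intro t ht
      have ht0 : 0 < t := by nlinarith [ht.1]
      have hu1 : Real.log 2 * (3/4) + Real.log r ≤ Real.log t := by
        have := Real.log_le_log (by positivity) ht.1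
        rw [Real.log_mul (by positivity) hr.ne', Real.log_rpow (by norm_num)] at this
        linarith
      set u := Real.log t - Real.log r with hu
      have hdecomp : c + c' * Real.log t = A + c' * u := by rw [hA, hu]; ring
      have habs : |c'| * (Real.log 2 * (3/4)) ≤ |c' * u| := by
        rw [abs_mul, abs_of_nonneg (by nlinarith : (0:ℝ) ≤ u)]
        apply mul_le_mul_of_nonneg_left (by linarith) (abs_nonneg _)
      have htri : |c' * u| - |A| ≤ |A + c' * u| := by
        have := abs_add_le (A + c' * u) (-A)
        simp at this
        have h2 := abs_add_le A (c' * u)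
        calc |c' * u| - |A| ≤ (|A| + |A + c' * u|) - |A| := by
              have : |c' * u| = |A + c' * u + -A| := by ring_nf
              rw [this]
              have := abs_add_le (A + c' * u) (-A)
              simp only [abs_neg] at this
              linarith
        _ = |A + c' * u| := by ring
      rw [hdecomp]
      linarith

lemma lma_pos (α c c' r K : ℝ) (hα : α < 0) (hr : 0 < r) (hK : 2 ≤ K)
    (hcc : (c, c') ≠ (0, 0)) :
    0 < ∫ t in r..K*r, (c + c' * Real.log t)^2 * t^(2*α-1) := by
  have hlog2 : 0 < Real.log 2 := Real.log_pos (by norm_num)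
  by_cases hc' : c' = 0
  · have hc : c ≠ 0 := by
      intro h; exact hcc (by rw [h, hc'])
    apply intervalIntegral.integral_pos (by nlinarith)
    · exact (lma_contOn c c' _).mono (fun t ht => lt_of_lt_of_le hr ht.1)
    · intro t ht
      exact mul_nonneg (sq_nonneg _) (Real.rpow_nonneg (le_of_lt (hr.trans ht.1)) _)
    · refine ⟨r, ⟨le_rfl, by nlinarith⟩, ?_⟩
      subst hc'
      have : (0:ℝ) < c^2 := by positivity
      simp only [zero_mul, add_zero]
      positivity
  · refine lt_of_lt_of_le ?_ (lma_lower α c c' r K hα hr hK)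
    have h2 : (0:ℝ) < (2:ℝ)^(2*α-1) := Real.rpow_pos_of_pos (by norm_num) _
    have h3 : (0:ℝ) < r^(2*α) := Real.rpow_pos_of_pos hr _
    positivity

/-- Claim 1 in Lemma 2.9: for `α < 0` there is `K₁ ≥ 2` (depending only on `α`)
such that for all `K ≥ K₁`, `r > 0` and `(c, c') ≠ (0, 0)`, the weighted mass
`I_K(r; c, c') = ∫_r^{Kr} (c s^α + c' s^α log s)² s⁻¹ ds` satisfies
`I_K(Kr; c, c') < I_K(r; c, c')`. -/
theorem log_mode_annulus_monotonicity (α : ℝ) (hα : α < 0) :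
    ∃ K₁ : ℝ, 2 ≤ K₁ ∧ ∀ K : ℝ, K₁ ≤ K → ∀ r : ℝ, 0 < r → ∀ c c' : ℝ,
      (c, c') ≠ (0, 0) →
      (∫ s in Ioc (K * r) (K * (K * r)),
          (c * s ^ α + c' * s ^ α * Real.log s) ^ 2 * s⁻¹)
        < ∫ s in Ioc r (K * r),
            (c * s ^ α + c' * s ^ α * Real.log s) ^ 2 * s⁻¹ := by
  have hlog2 : 0 < Real.log 2 := Real.log_pos (by norm_num)
  set V : ℝ := (Real.log 2)^2 * (2:ℝ)^(2*α-1) / 128 with hV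
  have hVpos : 0 < V := by
    have h2 := Real.rpow_pos_of_pos (show (0:ℝ) < 2 by norm_num) (2*α-1)
    positivity
  have h2α : 0 < -(2*α) := by linarith
  set β : ℝ := 1 / ((-(2*α)) * V) with hβ
  have hβpos : 0 < β := by positivity
  have t1 : Filter.Tendsto (fun K : ℝ => K ^ (2*α)) Filter.atTop (nhds 0) := by
    have := tendsto_rpow_neg_atTop (y := -(2*α)) h2α
    simpa using this
  have t2 : Filter.Tendsto (fun K : ℝ => K ^ α * Real.log K) Filter.atTop (nhds 0) := by
    have h := (isLittleO_log_rpow_atTop (show (0:ℝ) < -α by linarith)).tendsto_div_nhds_zero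
    apply h.congr'
    filter_upwards [Filter.eventually_gt_atTop (0:ℝ)] with K hK
    rw [Real.rpow_neg hK.le, div_eq_mul_inv, inv_inv, mul_comm]
  have t3 : Filter.Tendsto (fun K : ℝ => K ^ (2*α) * (Real.log K)^2) Filter.atTop (nhds 0) := by
    have h := t2.mul t2
    rw [mul_zero] at h
    apply h.congr'
    filter_upwards [Filter.eventually_gt_atTop (0:ℝ)] with K hK
    have hKK : K ^ α * K ^ α = K ^ (2*α) := by
      rw [← Real.rpow_add hK]; ring_nf
    calc K ^ α * Real.log K * (K ^ α * Real.log K)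
        = (K ^ α * K ^ α) * (Real.log K)^2 := by ring
      _ = K ^ (2*α) * (Real.log K)^2 := by rw [hKK]
  have tφ : Filter.Tendsto (fun K : ℝ => 2*K^(2*α) + 2*β*(K^(2*α) * (Real.log K)^2))
      Filter.atTop (nhds 0) := by
    have h := (t1.const_mul 2).add (t3.const_mul (2*β))
    simpa using h
  obtain ⟨K₀, hK₀⟩ := Filter.eventually_atTop.mp
    (tφ.eventually_lt_const (by norm_num : (0:ℝ) < 1))
  refine ⟨max 2 K₀, le_max_left _ _, ?_⟩
  intro K hKmax r hr c c' hcc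
  have hK2 : 2 ≤ K := le_trans (le_max_left _ _) hKmax
  have hK0 : 0 < K := by linarith
  have hφ : 2*K^(2*α) + 2*β*(K^(2*α) * (Real.log K)^2) < 1 :=
    hK₀ K (le_trans (le_max_right _ _) hKmax)
  have hKr0 : 0 < K * r := mul_pos hK0 hr
  have hrKr : r ≤ K * r := by nlinarith
  have hKKr : K*r ≤ K*(K*r) := by nlinarith
  rw [lma_rewrite α c c' (K*r) (K*(K*r)) hKr0 hKKr, lma_rewrite α c c' r (K*r) hr hrKr,
    lma_subst α c c' r K hr hK0]
  set D := ∫ s in r..(K*r), (c + c' * Real.log s)^2 * s^(2*α-1) with hD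
  have hDpos : 0 < D := lma_pos α c c' r K hα hr hK2 hcc
  have hE : c'^2 * V * r^(2*α) ≤ D := lma_lower α c c' r K hα hr hK2
  have hWint : IntervalIntegrable (fun s : ℝ => s^(2*α-1)) volume r (K*r) :=
    intervalIntegral.intervalIntegrable_rpow (Or.inr (Set.notMem_uIcc_of_lt hr hKr0))
  set W := ∫ s in r..(K*r), s^(2*α-1) with hW
  have hC : (∫ s in r..(K*r), ((c + c' * Real.log K) + c' * Real.log s)^2 * s^(2*α-1))
      ≤ 2*D + 2*(c'*Real.log K)^2 * W := by
    have hint1 := lma_integrable (c + c' * Real.log K) c' (2*α-1) r (K*r) hr hKr0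
    have hint2 := lma_integrable c c' (2*α-1) r (K*r) hr hKr0
    have hmono := intervalIntegral.integral_mono_on (μ := volume) hrKr hint1
      ((hint2.const_mul 2).add (hWint.const_mul (2*(c'*Real.log K)^2))) ?_
    · rw [intervalIntegral.integral_add (hint2.const_mul 2)
        (hWint.const_mul (2*(c'*Real.log K)^2)), intervalIntegral.integral_const_mul,
        intervalIntegral.integral_const_mul] at hmono
      exact hmono
    · intro s hs
      have hs0 : 0 < s := lt_of_lt_of_le hr hs.1
      have hrp : (0:ℝ) ≤ s^(2*α-1) := Real.rpow_nonneg hs0.le _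
      have key : ((c + c' * Real.log K) + c' * Real.log s)^2
          ≤ 2*(c + c'*Real.log s)^2 + 2*(c'*Real.log K)^2 := by
        nlinarith [sq_nonneg ((c + c'*Real.log s) - c'*Real.log K)]
      calc ((c + c' * Real.log K) + c' * Real.log s)^2 * s^(2*α-1)
          ≤ (2*(c + c'*Real.log s)^2 + 2*(c'*Real.log K)^2) * s^(2*α-1) :=
            mul_le_mul_of_nonneg_right key hrp
        _ = 2*((c + c'*Real.log s)^2 * s^(2*α-1)) + 2*(c'*Real.log K)^2 * s^(2*α-1) := by
            ring
  have hDbound : W ≤ r^(2*α) / (-(2*α)) := by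
    rw [hW, integral_rpow (Or.inr ⟨by intro h; linarith, Set.notMem_uIcc_of_lt hr hKr0⟩)]
    have he : 2*α - 1 + 1 = 2*α := by ring
    rw [he]
    have hKrpow : 0 < (K*r)^(2*α) := Real.rpow_pos_of_pos hKr0 _
    rw [le_div_iff₀ h2α]
    have h2ne : (2*α) ≠ 0 := by intro h; rw [h] at h2α; simp at h2α
    have h2 : ((K*r)^(2*α) - r^(2*α))/(2*α) * (-(2*α)) = r^(2*α) - (K*r)^(2*α) := by
      field_simp
      have hα0 : α ≠ 0 := hα.ne
      calc _ = -(K*r)^(α*2) * (α * α⁻¹) + r^(α*2) * (α * α⁻¹) := by ring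
        _ = _ := by rw [mul_inv_cancel₀ hα0]; ring
    rw [h2]
    linarith
  have h3 : c' ^ 2 * (r^(2*α)/(-(2*α))) ≤ β * D := by
    have hm := mul_le_mul_of_nonneg_left hE hβpos.le
    have hβV : β * V = 1/(-(2*α)) := by
      have h2ne : (2*α) ≠ 0 := by intro h; rw [h] at h2α; simp at h2α
      have hVne : V ≠ 0 := ne_of_gt hVpos
      rw [hβ]; field_simp
    have heq : β * (c'^2 * V * r^(2*α)) = c'^2 * (r^(2*α)/(-(2*α))) := by
      have : β * (c'^2 * V * r^(2*α)) = c'^2 * r^(2*α) * (β * V) := by ring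
      rw [this, hβV]; ring
    linarith [heq ▸ hm]
  have hstep : 2*(c'*Real.log K)^2 * W ≤ 2*β*(Real.log K)^2*D := by
    have h1 : 2*(c'*Real.log K)^2 * W ≤ 2*(c'*Real.log K)^2 * (r^(2*α)/(-(2*α))) :=
      mul_le_mul_of_nonneg_left hDbound (by positivity)
    have h4 := mul_le_mul_of_nonneg_left h3 (by positivity : (0:ℝ) ≤ 2*(Real.log K)^2)
    calc 2*(c'*Real.log K)^2 * W ≤ 2*(c'*Real.log K)^2 * (r^(2*α)/(-(2*α))) := h1
      _ = 2*(Real.log K)^2 * (c'^2 * (r^(2*α)/(-(2*α)))) := by ring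
      _ ≤ 2*(Real.log K)^2 * (β * D) := h4
      _ = 2*β*(Real.log K)^2*D := by ring
  have hKpow : 0 < K^(2*α) := Real.rpow_pos_of_pos hK0 _
  calc K^(2*α) * ∫ s in r..(K*r), ((c + c' * Real.log K) + c' * Real.log s)^2 * s^(2*α-1)
      ≤ K^(2*α) * (2*D + 2*β*(Real.log K)^2*D) :=
        mul_le_mul_of_nonneg_left (le_trans hC (by linarith)) hKpow.le
    _ = (2*K^(2*α) + 2*β*(K^(2*α)*(Real.log K)^2)) * D := by ring
    _ < 1 * D := mul_lt_mul_of_pos_right hφ hDpos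
    _ = D := one_mul D
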